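/- Let m and n be integers with 3 ≤ m ≤ n and set u = m+n-2. Then the set of points of the projective space ℙ(ℂ^m) (one-dimensional subspaces spanned by a = (a_1, …, a_m) ≠ 0) such that the u×n matrix a_1A_1 + ⋯ + a_mA_m has rank < n over ℂ is finite and has cardinality exactly the binomial coefficient C(u, m-1). -/

import Mathlib

open Polynomial Matrix Finset

/-- The `u×n` matrices `A_1, …, A_m` (here indexed by `k = 0, …, m-1`, so that `Amat K m n u k`
is `A_{k+1}`): for `k ≤ m-2`, `Amat K m n u k` has the `n×n` identity occupying rows
`k, …, k+n-1` (0-based) and all other entries `0`; `Amat K m n u (m-1)` (that is, `A_m`)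
has `-1` in position `(0, n-1)`, `1` in positions `(m-1+c, c)` for `0 ≤ c ≤ n-2`, and `0`
elsewhere. -/
def Amat (K : Type*) [Ring K] (m n u : ℕ) (k : ℕ) : Matrix (Fin u) (Fin n) K :=
  Matrix.of fun r c =>
    if k < m - 1 then (if (r : ℕ) = k + (c : ℕ) then 1 else 0)
    else if (r : ℕ) = 0 ∧ (c : ℕ) = n - 1 then -1
    else if (r : ℕ) = m - 1 + (c : ℕ) then 1 else 0


open Polynomial Matrix Finset

noncomputable def Pv {m : ℕ} (a : Fin m → ℂ) : ℂ[X] := ∑ k : Fin m, C (a k) * X ^ (k : ℕ)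

lemma Pv_coeff {m : ℕ} (a : Fin m → ℂ) (j : ℕ) :
    (Pv a).coeff j = if h : j < m then a ⟨j, h⟩ else 0 := by
  simp only [Pv, C_mul_X_pow_eq_monomial, finset_sum_coeff, coeff_monomial]
  split
  · next h =>
    refine Finset.sum_eq_single_of_mem ⟨j, h⟩ (Finset.mem_univ _) ?_ |>.trans (if_pos rfl)
    intro b _ hb
    exact if_neg fun hbj => hb (Fin.ext hbj)
  · next h =>
    refine Finset.sum_eq_zero fun k _ => if_neg fun hk => h ?_
    exact hk ▸ k.isLt

lemma Pv_natDegree_le {m : ℕ} (hm : 1 ≤ m) (a : Fin m → ℂ) : (Pv a).natDegree ≤ m - 1 := by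
  refine natDegree_le_iff_coeff_eq_zero.mpr fun j hj => ?_
  rw [Pv_coeff]
  exact dif_neg (by omega)

lemma Pv_eq_zero_iff {m : ℕ} (a : Fin m → ℂ) : Pv a = 0 ↔ a = 0 := by
  constructor
  · intro h
    funext k
    have := Pv_coeff a k
    rw [h, coeff_zero, dif_pos k.isLt] at this
    simpa using this.symm
  · rintro rfl; simp [Pv]

lemma Pv_smul {m : ℕ} (d : ℂ) (a : Fin m → ℂ) : Pv (d • a) = C d * Pv a := by
  ext j
  simp only [Pv_coeff, coeff_C_mul, Pi.smul_apply, smul_eq_mul]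
  split <;> simp

lemma Pv_ofCoeff {n : ℕ} (f : ℂ[X]) (h : f.natDegree < n) :
    Pv (fun c : Fin n => f.coeff c) = f := by
  ext j
  rw [Pv_coeff]
  split
  · rfl
  · next hj => exact (coeff_eq_zero_of_natDegree_lt (h.trans_le (by omega))).symm

lemma coeff_Pv_mul {m n : ℕ} (a : Fin m → ℂ) (v : Fin n → ℂ) (j : ℕ) :
    (Pv a * Pv v).coeff j
      = ∑ k : Fin m, ∑ c : Fin n, if (k : ℕ) + (c : ℕ) = j then a k * v c else 0 := by
  have : Pv a * Pv v = ∑ k : Fin m, ∑ c : Fin n, monomial ((k : ℕ) + (c : ℕ)) (a k * v c) := by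
    rw [Pv, Pv, Finset.sum_mul_sum]
    refine Finset.sum_congr rfl fun k _ => Finset.sum_congr rfl fun c _ => ?_
    rw [C_mul_X_pow_eq_monomial, C_mul_X_pow_eq_monomial, monomial_mul_monomial]
  rw [this]
  simp [finset_sum_coeff, coeff_monomial]
lemma Amat_apply {m n u : ℕ} (hm : 3 ≤ m) (hmn : m ≤ n) (hu : u = m + n - 2)
    (k : Fin m) (r : Fin u) (c : Fin n) :
    Amat ℂ m n u (k : ℕ) r c
      = (if (k : ℕ) + (c : ℕ) = (r : ℕ) then 1 else 0)
        - (if (r : ℕ) = 0 ∧ (k : ℕ) + (c : ℕ) = u then 1 else 0) := by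
  have hk := k.isLt; have hr := r.isLt; have hc := c.isLt
  show (if (k : ℕ) < m - 1 then (if (r : ℕ) = (k : ℕ) + (c : ℕ) then (1:ℂ) else 0)
    else if (r : ℕ) = 0 ∧ (c : ℕ) = n - 1 then -1
    else if (r : ℕ) = m - 1 + (c : ℕ) then 1 else 0) = _
  by_cases h1 : (k : ℕ) < m - 1
  · have h2 : ¬((r : ℕ) = 0 ∧ (k : ℕ) + (c : ℕ) = u) := by omega
    rw [if_pos h1, if_neg h2, sub_zero]
    exact if_congr (by omega) rfl rfl
  · have hk' : (k : ℕ) = m - 1 := by omega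
    rw [if_neg h1]
    by_cases h3 : (r : ℕ) = 0 ∧ (c : ℕ) = n - 1
    · have h4 : ¬((k : ℕ) + (c : ℕ) = (r : ℕ)) := by omega
      rw [if_pos h3, if_neg h4, if_pos ⟨h3.1, by omega⟩]
      norm_num
    · have h4 : ¬((r : ℕ) = 0 ∧ (k : ℕ) + (c : ℕ) = u) := by
        rintro ⟨h5, h6⟩; exact h3 ⟨h5, by omega⟩
      rw [if_neg h3, if_neg h4, sub_zero]
      exact if_congr (by omega) rfl rfl

lemma mulVec_apply_eq {m n u : ℕ} (hm : 3 ≤ m) (hmn : m ≤ n) (hu : u = m + n - 2)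
    (a : Fin m → ℂ) (v : Fin n → ℂ) (r : Fin u) :
    (∑ k : Fin m, a k • Amat ℂ m n u (k : ℕ)).mulVec v r
      = (Pv a * Pv v).coeff r
        - (if (r : ℕ) = 0 then (Pv a * Pv v).coeff u else 0) := by
  have hL : (∑ k : Fin m, a k • Amat ℂ m n u (k : ℕ)).mulVec v r
      = ∑ c : Fin n, (∑ k : Fin m, a k * Amat ℂ m n u (k : ℕ) r c) * v c := by
    simp [Matrix.mulVec, dotProduct, Matrix.sum_apply]
  rw [hL, coeff_Pv_mul, coeff_Pv_mul]
  have hsplit : ∀ c : Fin n, (∑ k : Fin m, a k * Amat ℂ m n u (k : ℕ) r c) * v c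
      = (∑ k : Fin m, if (k : ℕ) + (c : ℕ) = (r : ℕ) then a k * v c else 0)
        - (∑ k : Fin m, if (r : ℕ) = 0 ∧ (k : ℕ) + (c : ℕ) = u then a k * v c else 0) := by
    intro c
    rw [Finset.sum_mul, ← Finset.sum_sub_distrib]
    refine Finset.sum_congr rfl fun k _ => ?_
    rw [Amat_apply hm hmn hu, mul_sub, sub_mul]
    congr 1 <;> split <;> ring
  rw [Finset.sum_congr rfl fun c _ => hsplit c, Finset.sum_sub_distrib, Finset.sum_comm,
    Finset.sum_comm (f := fun (c : Fin n) (k : Fin m) => if (r : ℕ) = 0 ∧ (k : ℕ) + (c : ℕ) = u then a k * v c else 0)]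
  congr 1
  by_cases h0 : (r : ℕ) = 0 <;> simp [h0]

lemma mulVec_zero_iff {m n u : ℕ} (hm : 3 ≤ m) (hmn : m ≤ n) (hu : u = m + n - 2)
    (a : Fin m → ℂ) (v : Fin n → ℂ) :
    (∑ k : Fin m, a k • Amat ℂ m n u (k : ℕ)).mulVec v = 0 ↔
      Pv a * Pv v = C ((Pv a * Pv v).coeff u) * (X ^ u + 1) := by
  have hu0 : u ≠ 0 := by omega
  have hdeg : (Pv a * Pv v).natDegree ≤ u := by
    refine natDegree_mul_le.trans ?_
    have h1 := Pv_natDegree_le (show 1 ≤ m by omega) a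
    have h2 := Pv_natDegree_le (show 1 ≤ n by omega) v
    omega
  set g := Pv a * Pv v with hg
  set c := g.coeff u with hc
  have hco : ∀ j, (C c * (X ^ u + 1)).coeff j = if j = u then c else if j = 0 then c else 0 := by
    intro j
    rw [coeff_C_mul, coeff_add, coeff_X_pow, coeff_one]
    by_cases h1 : j = u <;> by_cases h2 : j = 0 <;>
      first | (exfalso; omega) | simp [h1, h2, hu0, Ne.symm hu0]
  constructor
  · intro h
    ext j
    rw [hco]
    rcases lt_trichotomy j u with hj | hj | hj
    · have h5 := congrFun h ⟨j, hj⟩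
      rw [mulVec_apply_eq hm hmn hu, Pi.zero_apply] at h5
      rw [if_neg (by omega)]
      rw [sub_eq_zero.mp h5]
    · rw [hj, if_pos rfl]
    · rw [if_neg (by omega), if_neg (by omega)]
      exact coeff_eq_zero_of_natDegree_lt (lt_of_le_of_lt hdeg hj)
  · intro h
    funext r
    rw [Pi.zero_apply, mulVec_apply_eq hm hmn hu, ← hg]
    have h1 : g.coeff (r : ℕ) = if (r : ℕ) = 0 then c else 0 := by
      rw [h, hco, if_neg (by have := r.isLt; omega)]
    rw [h1, ← hc, sub_self]

lemma rank_lt_iff {n u : ℕ} (M : Matrix (Fin u) (Fin n) ℂ) :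
    M.rank < n ↔ ∃ v : Fin n → ℂ, v ≠ 0 ∧ M.mulVec v = 0 := by
  have h := LinearMap.finrank_range_add_finrank_ker M.mulVecLin
  rw [show Module.finrank ℂ (Fin n → ℂ) = n by simp] at h
  rw [show M.rank = Module.finrank ℂ (LinearMap.range M.mulVecLin) from rfl]
  constructor
  · intro hlt
    have hk : LinearMap.ker M.mulVecLin ≠ ⊥ := by
      intro hb
      rw [hb, finrank_bot] at h
      omega
    obtain ⟨v, hv, hv0⟩ := (Submodule.ne_bot_iff _).mp hk
    exact ⟨v, hv0, hv⟩
  · rintro ⟨v, hv0, hv⟩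
    have hk : LinearMap.ker M.mulVecLin ≠ ⊥ := by
      intro hb
      have : v = 0 := by
        have : v ∈ LinearMap.ker M.mulVecLin := by
          rw [LinearMap.mem_ker, Matrix.mulVecLin_apply, hv]
        rwa [hb, Submodule.mem_bot] at this
      exact hv0 this
    have : Module.finrank ℂ (LinearMap.ker M.mulVecLin) ≠ 0 := by
      intro h0
      exact hk (Submodule.finrank_eq_zero.mp h0)
    omega

lemma Pv_injective {m : ℕ} : Function.Injective (Pv (m := m)) := by
  intro a b h
  funext k
  have h2 := congrArg (fun p => Polynomial.coeff p (k : ℕ)) h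
  simp only [Pv_coeff, dif_pos k.isLt] at h2
  exact h2

lemma W_splits (u : ℕ) : (((X : ℂ[X]) ^ u + 1)).Splits :=
  IsAlgClosed.splits _

lemma W_natDegree (u : ℕ) : ((X : ℂ[X]) ^ u + 1).natDegree = u := by
  rw [← C_1, natDegree_X_pow_add_C]

lemma W_roots_card {u : ℕ} (hu0 : u ≠ 0) : ((X : ℂ[X]) ^ u + 1).roots.card = u := by
  rw [splits_iff_card_roots.mp (W_splits u), W_natDegree]

lemma W_nodup {u : ℕ} (hu0 : u ≠ 0) : ((X : ℂ[X]) ^ u + 1).roots.Nodup := by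
  have hsep : ((X : ℂ[X]) ^ u + 1).Separable := by
    have h : (X : ℂ[X]) ^ u + 1 = X ^ u - C (-1) := by
      rw [map_neg, C_1, sub_neg_eq_add]
    rw [h]
    exact separable_X_pow_sub_C _ (Nat.cast_ne_zero.mpr hu0) (by norm_num)
  exact nodup_roots hsep

lemma W_monic {u : ℕ} (hu0 : u ≠ 0) : ((X : ℂ[X]) ^ u + 1).Monic := by
  rw [← C_1]; exact monic_X_pow_add_C _ hu0

lemma natDegree_prodXC (S : Finset ℂ) : (∏ ζ ∈ S, (X - C ζ)).natDegree = S.card := by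
  rw [Finset.prod_eq_multiset_prod]
  exact natDegree_multiset_prod_X_sub_C_eq_card _

lemma monic_prodXC (S : Finset ℂ) : (∏ ζ ∈ S, (X - C ζ)).Monic :=
  monic_prod_of_monic _ _ fun ζ _ => monic_X_sub_C ζ

lemma W_eq_prod {u : ℕ} (hu0 : u ≠ 0) :
    (X : ℂ[X]) ^ u + 1 = ∏ ζ ∈ ((X : ℂ[X]) ^ u + 1).roots.toFinset, (X - C ζ) := by
  have h1 := (W_splits u).eq_prod_roots_of_monic (W_monic hu0)
  rw [Finset.prod_eq_multiset_prod, Multiset.toFinset_val,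
    Multiset.dedup_eq_self.mpr (W_nodup hu0)]
  exact h1

lemma prodXC_inj {S S' : Finset ℂ} (d : ℂ)
    (h : ∏ ζ ∈ S, (X - C ζ) = C d * ∏ ζ ∈ S', (X - C ζ)) : S = S' := by
  have hd : d = 1 := by
    have h1 := congrArg leadingCoeff h
    rw [(monic_prodXC S).leadingCoeff, leadingCoeff_mul, leadingCoeff_C,
      (monic_prodXC S').leadingCoeff, mul_one] at h1
    exact h1.symm
  rw [hd, C_1, one_mul] at h
  have h2 := congrArg roots h
  rw [roots_prod_X_sub_C, roots_prod_X_sub_C] at h2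
  exact Finset.val_inj.mp h2

lemma key_forward {m n u : ℕ} (hm : 3 ≤ m) (hmn : m ≤ n) (hu : u = m + n - 2)
    (a : Fin m → ℂ) (ha : a ≠ 0) (v : Fin n → ℂ) (hv : v ≠ 0)
    (heq : Pv a * Pv v = C ((Pv a * Pv v).coeff u) * (X ^ u + 1)) :
    ∃ S ∈ Finset.powersetCard (m - 1) (((X : ℂ[X]) ^ u + 1).roots.toFinset),
      ∃ c : ℂ, c ≠ 0 ∧ Pv a = C c * ∏ ζ ∈ S, (X - C ζ) := by
  have hu0 : u ≠ 0 := by omega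
  have hp0 : Pv a ≠ 0 := fun h => ha ((Pv_eq_zero_iff a).mp h)
  have hq0 : Pv v ≠ 0 := fun h => hv ((Pv_eq_zero_iff v).mp h)
  have hpq0 : Pv a * Pv v ≠ 0 := mul_ne_zero hp0 hq0
  have hc0 : (Pv a * Pv v).coeff u ≠ 0 := by
    intro h
    rw [h, map_zero, zero_mul] at heq
    exact hpq0 heq
  have hdeg : (Pv a).natDegree + (Pv v).natDegree = u := by
    rw [← natDegree_mul hp0 hq0, heq, natDegree_C_mul hc0, W_natDegree]
  have hpdeg : (Pv a).natDegree = m - 1 := by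
    have h1 := Pv_natDegree_le (show 1 ≤ m by omega) a
    have h2 := Pv_natDegree_le (show 1 ≤ n by omega) v
    omega
  have hroots_le : (Pv a).roots ≤ ((X : ℂ[X]) ^ u + 1).roots := by
    have h3 : (Pv a * Pv v).roots = ((X : ℂ[X]) ^ u + 1).roots := by
      rw [heq, roots_C_mul _ hc0]
    rw [roots_mul hpq0] at h3
    exact h3 ▸ Multiset.le_add_right _ _
  have hnodup : (Pv a).roots.Nodup := Multiset.nodup_of_le hroots_le (W_nodup hu0)
  have hcard : (Pv a).roots.card = m - 1 := by
    rw [splits_iff_card_roots.mp (IsAlgClosed.splits (Pv a)), hpdeg]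
  refine ⟨(Pv a).roots.toFinset, ?_, (Pv a).leadingCoeff, leadingCoeff_ne_zero.mpr hp0, ?_⟩
  · rw [Finset.mem_powersetCard]
    refine ⟨fun ζ hζ => ?_, ?_⟩
    · rw [Multiset.mem_toFinset] at *
      exact Multiset.mem_of_le hroots_le hζ
    · rw [Multiset.toFinset_card_of_nodup hnodup, hcard]
  · have h4 := (IsAlgClosed.splits (Pv a)).eq_prod_roots
    rw [Finset.prod_eq_multiset_prod, Multiset.toFinset_val, Multiset.dedup_eq_self.mpr hnodup]
    exact h4

lemma key_backward {m n u : ℕ} (hm : 3 ≤ m) (hmn : m ≤ n) (hu : u = m + n - 2)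
    (a : Fin m → ℂ) (S : Finset ℂ)
    (hS : S ∈ Finset.powersetCard (m - 1) (((X : ℂ[X]) ^ u + 1).roots.toFinset))
    (c : ℂ) (hc : c ≠ 0) (hP : Pv a = C c * ∏ ζ ∈ S, (X - C ζ)) :
    ∃ v : Fin n → ℂ, v ≠ 0 ∧
      Pv a * Pv v = C ((Pv a * Pv v).coeff u) * (X ^ u + 1) := by
  have hu0 : u ≠ 0 := by omega
  obtain ⟨hsub, hcard⟩ := Finset.mem_powersetCard.mp hS
  have hTcard : (((X : ℂ[X]) ^ u + 1).roots.toFinset).card = u := by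
    rw [Multiset.toFinset_card_of_nodup (W_nodup hu0), W_roots_card hu0]
  set q : ℂ[X] := ∏ ζ ∈ ((X : ℂ[X]) ^ u + 1).roots.toFinset \ S, (X - C ζ) with hq
  have hqdeg : q.natDegree = n - 1 := by
    rw [hq, natDegree_prodXC, Finset.card_sdiff_of_subset hsub, hTcard, hcard]
    omega
  have hqn : q.natDegree < n := by omega
  set v : Fin n → ℂ := fun c => q.coeff c with hvdef
  have hqv : Pv v = q := Pv_ofCoeff q hqn
  have hv0 : v ≠ 0 := by
    intro h
    apply (monic_prodXC (((X : ℂ[X]) ^ u + 1).roots.toFinset \ S)).ne_zero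
    rw [← hq, ← hqv, h, (Pv_eq_zero_iff _).mpr rfl]
  have hprod : Pv a * Pv v = C c * ((X : ℂ[X]) ^ u + 1) := by
    rw [hqv, hP, mul_assoc]
    congr 1
    rw [W_eq_prod hu0, mul_comm]
    exact Finset.prod_sdiff hsub
  have hcoeff : (Pv a * Pv v).coeff u = c := by
    rw [hprod, coeff_C_mul, coeff_add, coeff_X_pow, coeff_one, if_pos rfl, if_neg hu0,
      add_zero, mul_one]
  exact ⟨v, hv0, by rw [hcoeff, hprod]⟩

theorem stmt4 (m n u : ℕ) (hm : 3 ≤ m) (hmn : m ≤ n) (hu : u = m + n - 2) :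
    {x : Projectivization ℂ (Fin m → ℂ) |
        (∑ k : Fin m, x.rep k • Amat ℂ m n u (k : ℕ)).rank < n}.Finite ∧
      {x : Projectivization ℂ (Fin m → ℂ) |
        (∑ k : Fin m, x.rep k • Amat ℂ m n u (k : ℕ)).rank < n}.ncard =
        Nat.choose u (m - 1) := by
  have hu0 : u ≠ 0 := by omega
  set T : Finset ℂ := ((X : ℂ[X]) ^ u + 1).roots.toFinset with hT
  have hTcard : T.card = u := by
    rw [hT, Multiset.toFinset_card_of_nodup (W_nodup hu0), W_roots_card hu0]
  set pc := Finset.powersetCard (m - 1) T with hpc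
  set F : Finset ℂ → (Fin m → ℂ) := fun S k => (∏ ζ ∈ S, (X - C ζ)).coeff k with hF
  have hPF : ∀ S : Finset ℂ, S.card = m - 1 → Pv (F S) = ∏ ζ ∈ S, (X - C ζ) := by
    intro S hS
    exact Pv_ofCoeff _ (by rw [natDegree_prodXC, hS]; omega)
  have hF0 : ∀ S : Finset ℂ, S.card = m - 1 → F S ≠ 0 := by
    intro S hS h
    apply (monic_prodXC S).ne_zero
    rw [← hPF S hS, h, (Pv_eq_zero_iff _).mpr rfl]
  haveI : Nonempty (Projectivization ℂ (Fin m → ℂ)) := by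
    refine ⟨Projectivization.mk ℂ (fun _ => 1) fun h => ?_⟩
    have := congrFun h ⟨0, by omega⟩
    simpa using this
  haveI := Classical.inhabited_of_nonempty this
  set G : Finset ℂ → Projectivization ℂ (Fin m → ℂ) := fun S =>
    if h : S.card = m - 1 then Projectivization.mk ℂ (F S) (hF0 S h) else default with hG
  have hset : {x : Projectivization ℂ (Fin m → ℂ) |
      (∑ k : Fin m, x.rep k • Amat ℂ m n u (k : ℕ)).rank < n} = G '' ↑pc := by
    ext x
    constructor
    · intro hx
      simp only [Set.mem_setOf_eq] at hx
      rw [rank_lt_iff] at hx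
      obtain ⟨v, hv0, hveq⟩ := hx
      rw [mulVec_zero_iff hm hmn hu] at hveq
      obtain ⟨S, hS, c, hc, hPa⟩ := key_forward hm hmn hu x.rep x.rep_nonzero v hv0 hveq
      have hScard := (Finset.mem_powersetCard.mp hS).2
      refine ⟨S, Finset.mem_coe.mpr hS, ?_⟩
      have hrep : x.rep = c • F S := Pv_injective (by rw [Pv_smul, hPF S hScard, hPa])
      show G S = x
      rw [show G S = Projectivization.mk ℂ (F S) (hF0 S hScard) from dif_pos hScard]
      conv_rhs => rw [← x.mk_rep]
      rw [Projectivization.mk_eq_mk_iff']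
      exact ⟨c⁻¹, by rw [hrep, smul_smul, inv_mul_cancel₀ hc, one_smul]⟩
    · rintro ⟨S, hS, rfl⟩
      have hS' : S ∈ pc := Finset.mem_coe.mp hS
      have hScard := (Finset.mem_powersetCard.mp hS').2
      simp only [Set.mem_setOf_eq]
      rw [rank_lt_iff]
      have hGS : G S = Projectivization.mk ℂ (F S) (hF0 S hScard) := dif_pos hScard
      obtain ⟨d, hd⟩ := Projectivization.exists_smul_eq_mk_rep ℂ (F S) (hF0 S hScard)
      rw [Units.smul_def] at hd
      have hrep : (G S).rep = (d : ℂ) • F S := by rw [hGS]; exact hd.symm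
      have hPa : Pv ((G S).rep) = C (d : ℂ) * ∏ ζ ∈ S, (X - C ζ) := by
        rw [hrep, Pv_smul, hPF S hScard]
      obtain ⟨v, hv0, hveq⟩ := key_backward hm hmn hu _ S hS' (d : ℂ) d.ne_zero hPa
      exact ⟨v, hv0, (mulVec_zero_iff hm hmn hu _ v).mpr hveq⟩
  have hinj : Set.InjOn G ↑pc := by
    intro S hSm S' hS'm hGG
    have h1 := (Finset.mem_powersetCard.mp (Finset.mem_coe.mp hSm)).2
    have h2 := (Finset.mem_powersetCard.mp (Finset.mem_coe.mp hS'm)).2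
    rw [show G S = Projectivization.mk ℂ (F S) (hF0 S h1) from dif_pos h1,
      show G S' = Projectivization.mk ℂ (F S') (hF0 S' h2) from dif_pos h2,
      Projectivization.mk_eq_mk_iff'] at hGG
    obtain ⟨c, hc⟩ := hGG
    have h3 : Pv (F S) = C c * Pv (F S') := by rw [← hc, Pv_smul]
    rw [hPF S h1, hPF S' h2] at h3
    exact prodXC_inj c h3
  constructor
  · rw [hset]
    exact pc.finite_toSet.image G
  · rw [hset, Set.ncard_image_of_injOn hinj, Set.ncard_coe_finset, hpc,
      Finset.card_powersetCard, hTcard]
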